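/- Let K be an algebraically closed field of characteristic zero, n ≥ 1, and let R be a commutative local associative unital K-algebra of K-dimension n+1. Then the action of the unit group R^× on R by multiplication has only finitely many orbits if and only if R is isomorphic as a K-algebra to K[x]/(x^{n+1}). (Orbits of R^× on nonzero elements are exactly the association classes, which correspond to the G_a^n-orbits on P^n; hence this says that K[x]/(x^{n+1}) is the unique (n+1)-dimensional local algebra of modality zero.) -/

import Mathlib

open IsLocalRing Polynomial MulAction

section Aux

variable {K R : Type*}

/-- In a local ring whose maximal ideal is generated by `t`, every element is divisible by
`t ^ N` or is a unit multiple of a smaller power of `t`. -/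
private theorem aux_classify [CommRing R] [IsLocalRing R] (t : R)
    (ht : maximalIdeal R = Ideal.span {t}) (N : ℕ) (a : R) :
    t ^ N ∣ a ∨ ∃ k < N, ∃ u : Rˣ, a = ↑u * t ^ k := by
  induction N with
  | zero => exact Or.inl (by simpa using one_dvd a)
  | succ N ih =>
    rcases ih with ⟨b, hb⟩ | ⟨k, hk, u, hu⟩
    · by_cases hbu : IsUnit b
      · obtain ⟨u, rfl⟩ := hbu
        exact Or.inr ⟨N, Nat.lt_succ_self N, u, by rw [hb]; ring⟩
      · have hbm : b ∈ maximalIdeal R := by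
          rw [mem_maximalIdeal, mem_nonunits_iff]; exact hbu
        rw [ht, Ideal.mem_span_singleton] at hbm
        obtain ⟨c, rfl⟩ := hbm
        exact Or.inl ⟨c, by rw [hb, pow_succ]; ring⟩
    · exact Or.inr ⟨k, Nat.lt_succ_of_lt hk, u, hu⟩

/-- If the maximal ideal of a local ring is generated by a nilpotent element then the unit
group has finitely many orbits on the ring. -/
private theorem aux_finite [CommRing R] [IsLocalRing R] (t : R)
    (ht : maximalIdeal R = Ideal.span {t}) (N : ℕ) (htN : t ^ N = 0) :
    Finite (orbitRel.Quotient Rˣ R) := by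
  have hsurj : Function.Surjective
      (fun k : Fin (N + 1) =>
        (Quotient.mk (orbitRel Rˣ R) (t ^ (k : ℕ)) : orbitRel.Quotient Rˣ R)) := by
    intro q
    obtain ⟨a, rfl⟩ := Quotient.exists_rep q
    rcases aux_classify t ht N a with ⟨b, hb⟩ | ⟨k, hk, u, hu⟩
    · refine ⟨⟨N, Nat.lt_succ_self N⟩, ?_⟩
      have h0 : t ^ N = a := by rw [htN, hb, htN, zero_mul]
      exact congrArg (Quotient.mk (orbitRel Rˣ R)) h0
    · refine ⟨⟨k, Nat.lt_succ_of_lt hk⟩, ?_⟩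
      refine Quotient.sound ?_
      have hu' : a = u • t ^ k := by rw [Units.smul_def, smul_eq_mul]; exact hu
      exact mem_orbit_iff.mpr ⟨u⁻¹, inv_smul_eq_iff.mpr hu'⟩
  exact Finite.of_surjective _ hsurj

/-- In a finite-dimensional local algebra over an algebraically closed field, every element is
a scalar plus an element of the maximal ideal. -/
private theorem aux_residue [CommRing R] [IsLocalRing R] [Field K] [IsAlgClosed K]
    [Algebra K R] [FiniteDimensional K R] (u : R) :
    ∃ c : K, u - algebraMap K R c ∈ maximalIdeal R := by
  have hint : Algebra.IsIntegral K (R ⧸ maximalIdeal R) := by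
    constructor
    intro x
    obtain ⟨v, rfl⟩ := Ideal.Quotient.mk_surjective (I := maximalIdeal R) x
    exact (Algebra.IsIntegral.isIntegral v).map (Ideal.Quotient.mkₐ K (maximalIdeal R))
  obtain ⟨c, hc⟩ := (IsAlgClosed.algebraMap_bijective_of_isIntegral
    (k := K) (K := R ⧸ maximalIdeal R)).2 (Ideal.Quotient.mk (maximalIdeal R) u)
  refine ⟨c, ?_⟩
  have h0 : Ideal.Quotient.mk (maximalIdeal R) (u - algebraMap K R c) = 0 := by
    rw [map_sub, sub_eq_zero, ← hc]
    rfl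
  exact Ideal.Quotient.eq_zero_iff_mem.mp h0

/-- A Nakayama-type argument: if `m ≤ m² + (x)` with `m` nilpotent, then `m = (x)`. -/
private theorem aux_span [CommRing R] [IsLocalRing R] {N : ℕ}
    (hN : maximalIdeal R ^ N = ⊥) {x : R} (hx : x ∈ maximalIdeal R)
    (h : maximalIdeal R ≤ maximalIdeal R ^ 2 ⊔ Ideal.span {x}) :
    maximalIdeal R = Ideal.span {x} := by
  have key : ∀ k : ℕ, maximalIdeal R ≤ maximalIdeal R ^ (k + 1) ⊔ Ideal.span {x} := by
    intro k
    induction k with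
    | zero => simpa using le_sup_left
    | succ k ih =>
      refine ih.trans (sup_le ?_ le_sup_right)
      calc maximalIdeal R ^ (k + 1) = maximalIdeal R ^ k * maximalIdeal R := pow_succ _ _
        _ ≤ maximalIdeal R ^ k * (maximalIdeal R ^ 2 ⊔ Ideal.span {x}) :=
            Ideal.mul_mono_right h
        _ = maximalIdeal R ^ k * maximalIdeal R ^ 2 ⊔ maximalIdeal R ^ k * Ideal.span {x} :=
            Ideal.mul_sup _ _ _
        _ ≤ maximalIdeal R ^ (k + 1 + 1) ⊔ Ideal.span {x} :=
            sup_le_sup (le_of_eq (by rw [← pow_add])) Ideal.mul_le_right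
  refine le_antisymm ?_ ((Ideal.span_singleton_le_iff_mem _).mpr hx)
  have h2 : maximalIdeal R ^ (N + 1) ≤ ⊥ := by
    rw [← hN]; exact Ideal.pow_le_pow_right (Nat.le_succ N)
  exact (key N).trans (sup_le (h2.trans bot_le) le_rfl)

/-- If the orbit space is finite then the maximal ideal is principal. -/
private theorem aux_gen [CommRing R] [IsLocalRing R] [Field K] [IsAlgClosed K] [CharZero K]
    [Algebra K R] [FiniteDimensional K R]
    (hfin : Finite (orbitRel.Quotient Rˣ R)) :
    ∃ t : R, maximalIdeal R = Ideal.span {t} := by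
  have hart : IsArtinianRing R := isArtinian_of_tower K inferInstance
  obtain ⟨N, hN⟩ : IsNilpotent (maximalIdeal R) := by
    rw [← jacobson_eq_maximalIdeal (⊥ : Ideal R) bot_ne_top]
    exact IsArtinianRing.isNilpotent_jacobson_bot
  have hN' : maximalIdeal R ^ N = ⊥ := hN
  by_contra hcon
  push_neg at hcon
  obtain ⟨x, hx, hx2⟩ : ∃ x ∈ maximalIdeal R, x ∉ maximalIdeal R ^ 2 := by
    by_contra h
    push_neg at h
    have hle : maximalIdeal R ≤ maximalIdeal R ^ 2 := fun a ha => h a ha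
    exact hcon 0 (aux_span hN' (zero_mem _) (hle.trans le_sup_left))
  obtain ⟨y, hy, hy2⟩ : ∃ y ∈ maximalIdeal R, y ∉ maximalIdeal R ^ 2 ⊔ Ideal.span {x} := by
    by_contra h
    push_neg at h
    exact hcon x (aux_span hN' hx fun a ha => h a ha)
  have hinj : Function.Injective
      (fun c : K => (Quotient.mk (orbitRel Rˣ R) (x + algebraMap K R c * y) :
        orbitRel.Quotient Rˣ R)) := by
    intro c c' hcc
    have hrel : x + algebraMap K R c * y ∈ orbit Rˣ (x + algebraMap K R c' * y) :=
      Quotient.exact hcc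
    obtain ⟨u, hu⟩ := mem_orbit_iff.mp hrel
    obtain ⟨c₀, hc₀⟩ := aux_residue (K := K) (↑u : R)
    set w := (↑u : R) - algebraMap K R c₀ with hw
    have hu' : x + algebraMap K R c * y
        = algebraMap K R c₀ * (x + algebraMap K R c' * y)
          + w * (x + algebraMap K R c' * y) := by
      rw [hw, ← hu, Units.smul_def, smul_eq_mul]; ring
    have hz : w * (x + algebraMap K R c' * y) ∈ maximalIdeal R ^ 2 := by
      rw [pow_two]
      exact Ideal.mul_mem_mul hc₀ (add_mem hx (Ideal.mul_mem_left _ _ hy))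
    have hkey : algebraMap K R (c - c₀ * c') * y
        = algebraMap K R (c₀ - 1) * x + w * (x + algebraMap K R c' * y) := by
      rw [map_sub, map_sub, map_mul, map_one]
      linear_combination hu'
    by_cases hne : c - c₀ * c' = 0
    · have h0 : algebraMap K R (c₀ - 1) * x + w * (x + algebraMap K R c' * y) = 0 := by
        rw [← hkey, hne, map_zero, zero_mul]
      have hxmem : algebraMap K R (c₀ - 1) * x ∈ maximalIdeal R ^ 2 := by
        rw [eq_neg_of_add_eq_zero_left h0]
        exact neg_mem hz
      by_cases h1 : c₀ - 1 = 0
      · have hc01 : c₀ = 1 := sub_eq_zero.mp h1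
        have : c = c₀ * c' := sub_eq_zero.mp hne
        rw [hc01, one_mul] at this
        exact this
      · exfalso
        apply hx2
        have hxx : x = algebraMap K R (c₀ - 1)⁻¹ * (algebraMap K R (c₀ - 1) * x) := by
          rw [← mul_assoc, ← map_mul, inv_mul_cancel₀ h1, map_one, one_mul]
        rw [hxx]
        exact Ideal.mul_mem_left _ _ hxmem
    · exfalso
      apply hy2
      have hmem : algebraMap K R (c₀ - 1) * x + w * (x + algebraMap K R c' * y)
          ∈ maximalIdeal R ^ 2 ⊔ Ideal.span {x} :=
        Submodule.add_mem _
          (Submodule.mem_sup_right (Ideal.mem_span_singleton.mpr (dvd_mul_left x _)))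
          (Submodule.mem_sup_left hz)
      have hyy : y = algebraMap K R (c - c₀ * c')⁻¹ * (algebraMap K R (c - c₀ * c') * y) := by
        rw [← mul_assoc, ← map_mul, inv_mul_cancel₀ hne, map_one, one_mul]
      rw [hyy, hkey]
      exact Ideal.mul_mem_left _ _ hmem
  have hInf : Infinite (orbitRel.Quotient Rˣ R) := Infinite.of_injective _ hinj
  rw [← not_infinite_iff_finite] at hfin
  exact hfin hInf

/-- If the maximal ideal is principal then `R ≅ K[X]/(X^{n+1})`. -/
private theorem aux_iso [CommRing R] [IsLocalRing R] [Field K] [IsAlgClosed K]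
    [Algebra K R] [FiniteDimensional K R] (n : ℕ) (hdim : Module.finrank K R = n + 1)
    {t : R} (ht : maximalIdeal R = Ideal.span {t}) :
    Nonempty (R ≃ₐ[K] (Polynomial K ⧸ Ideal.span {(X : Polynomial K) ^ (n + 1)})) := by
  have hart : IsArtinianRing R := isArtinian_of_tower K inferInstance
  obtain ⟨N, hN⟩ : IsNilpotent (maximalIdeal R) := by
    rw [← jacobson_eq_maximalIdeal (⊥ : Ideal R) bot_ne_top]
    exact IsArtinianRing.isNilpotent_jacobson_bot
  have hN' : maximalIdeal R ^ N = ⊥ := hN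
  have htm : t ∈ maximalIdeal R := ht ▸ Ideal.mem_span_singleton_self t
  have htN : t ^ N = 0 := by
    have h1 : t ^ N ∈ maximalIdeal R ^ N := Ideal.pow_mem_pow htm N
    rw [hN'] at h1
    simpa using h1
  have hsub : ∀ k : ℕ, ∀ a ∈ maximalIdeal R ^ (N - k),
      ∃ p : Polynomial K, aeval t p = a := by
    intro k
    induction k with
    | zero =>
      intro a ha
      rw [Nat.sub_zero, hN'] at ha
      exact ⟨0, by simpa using (Submodule.mem_bot R).mp ha |>.symm⟩
    | succ k ih =>
      intro a ha
      by_cases hk : N ≤ k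
      · have hEq : N - (k + 1) = N - k := by omega
        rw [hEq] at ha
        exact ih a ha
      · set j := N - (k + 1) with hj
        have hmj : maximalIdeal R ^ j = Ideal.span {t ^ j} := by
          rw [ht, Ideal.span_singleton_pow]
        obtain ⟨b, hb⟩ := Ideal.mem_span_singleton.mp (hmj ▸ ha)
        obtain ⟨c₀, hc₀⟩ := aux_residue (K := K) b
        set w := b - algebraMap K R c₀ with hwdef
        have hwt : t ^ j * w ∈ maximalIdeal R ^ (N - k) := by
          have h1 : t ^ j * w ∈ maximalIdeal R ^ (j + 1) := by
            rw [pow_succ]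
            exact Ideal.mul_mem_mul (Ideal.pow_mem_pow htm j) hc₀
          exact Ideal.pow_le_pow_right (by omega : N - k ≤ j + 1) h1
        obtain ⟨p, hp⟩ := ih _ hwt
        refine ⟨C c₀ * X ^ j + p, ?_⟩
        rw [map_add, map_mul, aeval_C, map_pow, aeval_X, hp, hb, hwdef]
        ring
  have hsurj : Function.Surjective (aeval t : Polynomial K →ₐ[K] R) := by
    intro a
    obtain ⟨p, hp⟩ := hsub N a (by rw [Nat.sub_self, pow_zero, Ideal.one_eq_top]; trivial)
    exact ⟨p, hp⟩
  obtain ⟨g, hg⟩ := (IsPrincipalIdealRing.principal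
    (RingHom.ker (aeval t : Polynomial K →ₐ[K] R))).principal
  have hXN : (X : Polynomial K) ^ N ∈ RingHom.ker (aeval t : Polynomial K →ₐ[K] R) := by
    rw [RingHom.mem_ker, map_pow, aeval_X, htN]
  have hdvd : g ∣ (X : Polynomial K) ^ N := by
    rw [hg] at hXN
    exact Ideal.mem_span_singleton.mp hXN
  obtain ⟨i, hiN, hassoc⟩ := (dvd_prime_pow Polynomial.prime_X N).mp hdvd
  have hker : RingHom.ker (aeval t : Polynomial K →ₐ[K] R)
      = Ideal.span {(X : Polynomial K) ^ i} := by
    rw [hg]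
    exact Ideal.span_singleton_eq_span_singleton.mpr hassoc
  let e : (Polynomial K ⧸ RingHom.ker (aeval t : Polynomial K →ₐ[K] R)) ≃ₐ[K] R :=
    Ideal.quotientKerAlgEquivOfSurjective hsurj
  have hfr : Module.finrank K (Polynomial K ⧸ Ideal.span {(X : Polynomial K) ^ i}) = i := by
    have h0 : ((X : Polynomial K) ^ i) ≠ 0 := pow_ne_zero _ X_ne_zero
    have hpb := (AdjoinRoot.powerBasis h0).finrank
    exact (by simpa [AdjoinRoot.powerBasis, natDegree_X_pow] using hpb :
      Module.finrank K (AdjoinRoot ((X : Polynomial K) ^ i)) = i)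
  have hi : i = n + 1 := by
    have h1 : Module.finrank K
        (Polynomial K ⧸ RingHom.ker (aeval t : Polynomial K →ₐ[K] R)) = n + 1 := by
      rw [e.toLinearEquiv.finrank_eq, hdim]
    rw [hker, hfr] at h1
    exact h1
  exact ⟨e.symm.trans (Ideal.quotientEquivAlgOfEq K (by rw [hker, hi]))⟩

/-- Conversely, if `R ≅ K[X]/(X^{n+1})` then the orbit space is finite. -/
private theorem aux_rev [CommRing R] [IsLocalRing R] [Field K] [Algebra K R] (n : ℕ)
    (e : R ≃ₐ[K] (Polynomial K ⧸ Ideal.span {(X : Polynomial K) ^ (n + 1)})) :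
    Finite (orbitRel.Quotient Rˣ R) := by
  set I : Ideal (Polynomial K) := Ideal.span {(X : Polynomial K) ^ (n + 1)} with hI
  set t : R := e.symm (Ideal.Quotient.mk I X) with htdef
  have hmkpow : (Ideal.Quotient.mk I X) ^ (n + 1) = 0 := by
    rw [← map_pow, Ideal.Quotient.eq_zero_iff_mem]
    exact Ideal.subset_span rfl
  have htpow : t ^ (n + 1) = 0 := by
    rw [htdef, ← map_pow, hmkpow, map_zero]
  have ht : maximalIdeal R = Ideal.span {t} := by
    apply le_antisymm
    · intro a ha
      rw [mem_maximalIdeal, mem_nonunits_iff] at ha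
      rw [Ideal.mem_span_singleton]
      by_contra hdvd
      apply ha
      obtain ⟨f, hf⟩ := Ideal.Quotient.mk_surjective (e a)
      by_cases hc : f.coeff 0 = 0
      · exfalso
        apply hdvd
        obtain ⟨g, hgf⟩ := (X_dvd_iff).mpr hc
        refine ⟨e.symm (Ideal.Quotient.mk I g), ?_⟩
        have : e a = Ideal.Quotient.mk I X * Ideal.Quotient.mk I g := by
          rw [← map_mul, ← hgf, hf]
        calc a = e.symm (e a) := (e.symm_apply_apply a).symm
          _ = e.symm (Ideal.Quotient.mk I X * Ideal.Quotient.mk I g) := by rw [this]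
          _ = t * e.symm (Ideal.Quotient.mk I g) := by rw [map_mul, htdef]
      · -- e a = unit + nilpotent, hence a is a unit
        have hsplit : e a = Ideal.Quotient.mk I (C (f.coeff 0))
            + Ideal.Quotient.mk I (f - C (f.coeff 0)) := by
          rw [← map_add, add_sub_cancel, hf]
        obtain ⟨g, hgf⟩ := (X_dvd_iff).mpr (by simp : (f - C (f.coeff 0)).coeff 0 = 0)
        have hnil : IsNilpotent (Ideal.Quotient.mk I (f - C (f.coeff 0))) := by
          refine ⟨n + 1, ?_⟩
          rw [hgf, ← map_pow, Ideal.Quotient.eq_zero_iff_mem, mul_pow]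
          exact Ideal.mul_mem_right _ _ (Ideal.subset_span rfl)
        have hunit : IsUnit (Ideal.Quotient.mk I (C (f.coeff 0))) :=
          (isUnit_C.mpr (isUnit_iff_ne_zero.mpr hc)).map (Ideal.Quotient.mk I)
        have hua : IsUnit (e a) := by
          rw [hsplit]
          exact hnil.isUnit_add_left_of_commute hunit (Commute.all _ _)
        have : IsUnit (e.symm (e a)) := hua.map e.symm
        rwa [e.symm_apply_apply] at this
    · rw [Ideal.span_singleton_le_iff_mem, mem_maximalIdeal, mem_nonunits_iff]
      intro hunit
      have h0 : IsUnit (0 : R) := by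
        rw [← htpow]; exact hunit.pow (n + 1)
      exact zero_ne_one (isUnit_zero_iff.mp h0)
  exact aux_finite t ht (n + 1) htpow

end Aux

/-- let `K` be algebraically closed of characteristic zero, `n ≥ 1`, and `R` a
commutative local `K`-algebra of dimension `n+1`. The multiplication action of the unit group
`Rˣ` on `R` has finitely many orbits if and only if `R ≅ K[x]/(x^{n+1})`. -/
theorem stmt7 (K R : Type*) [Field K] [IsAlgClosed K] [CharZero K]
    [CommRing R] [Algebra K R] [IsLocalRing R] [FiniteDimensional K R]
    (n : ℕ) (hn : 1 ≤ n) (hdim : Module.finrank K R = n + 1) :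
    Finite (MulAction.orbitRel.Quotient Rˣ R) ↔
      Nonempty (R ≃ₐ[K]
        (Polynomial K ⧸ Ideal.span {(Polynomial.X : Polynomial K) ^ (n + 1)})) := by
  constructor
  · intro hfin
    obtain ⟨t, ht⟩ := aux_gen (K := K) hfin
    exact aux_iso n hdim ht
  · rintro ⟨e⟩
    exact aux_rev n e
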